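/- Let L : ℝ^d × M^{m×d} → [0,∞] be Borel measurable, 1-periodic in x, and periodically ru-usc with respect to a 1-periodic a ∈ L¹_loc(ℝ^d;(0,∞)). Define the homogenized integrand ℋL(ξ) := inf over integers k ≥ 1 and φ ∈ W^{1,p}_0(kY; ℝ^m) of the average over kY of L(x, ξ + ∇φ(x)) dx, where Y = (0,1)^d. Then ℋL is ru-usc with respect to the constant ⟨a⟩ = ∫_Y a(y) dy; more precisely Δ_{ℋL}^{⟨a⟩}(t) ≤ Δ_L^a(t) for all t ∈ [0,1]. -/

import Mathlib

open MeasureTheory ENNReal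

noncomputable instance {m d : ℕ} : MeasurableSpace (Matrix (Fin m) (Fin d) ℝ) := borel _
instance {m d : ℕ} : BorelSpace (Matrix (Fin m) (Fin d) ℝ) := ⟨rfl⟩


open Filter

/-- The quantity `Δ_L^a(t)` of the paper, valued in `EReal`. -/
noncomputable def Delta {d m n : ℕ} (U : Set (EuclideanSpace ℝ (Fin d)))
    (L : EuclideanSpace ℝ (Fin d) → Matrix (Fin m) (Fin n) ℝ → ℝ≥0∞)
    (a : EuclideanSpace ℝ (Fin d) → ℝ) (t : ℝ) : EReal :=
  ⨆ x ∈ U, ⨆ ξ ∈ {ξ : Matrix (Fin m) (Fin n) ℝ | L x ξ < ⊤},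
    ((L x (t • ξ) : EReal) - (L x ξ : EReal)) / ((a x : EReal) + (L x ξ : EReal))


/-- The open cube `(0,k)^d` in `ℝ^d`. -/
def cube (d : ℕ) (k : ℕ) : Set (EuclideanSpace ℝ (Fin d)) :=
  {x | ∀ i, x i ∈ Set.Ioo (0 : ℝ) (k : ℝ)}

/-- The gradient matrix `∇φ(x)` of a map `φ : ℝ^d → ℝ^m`. -/
noncomputable def gradMat {d m : ℕ} (φ : EuclideanSpace ℝ (Fin d) → EuclideanSpace ℝ (Fin m))
    (x : EuclideanSpace ℝ (Fin d)) : Matrix (Fin m) (Fin d) ℝ :=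
  Matrix.of fun i j => fderiv ℝ φ x (EuclideanSpace.single j 1) i

/-- A model for `W^{1,p}_0(A;ℝ^m)`: `C¹` maps supported in `A` which together with
their differential belong to `L^p`. -/
def W1p0 {d m : ℕ} (p : ℝ≥0∞) (A : Set (EuclideanSpace ℝ (Fin d))) :
    Set (EuclideanSpace ℝ (Fin d) → EuclideanSpace ℝ (Fin m)) :=
  {φ | ContDiff ℝ 1 φ ∧ tsupport φ ⊆ A ∧ MeasureTheory.MemLp φ p ∧
    MeasureTheory.MemLp (fun x => fderiv ℝ φ x) p}

/-- The Braides–Müller homogenization formula `ℋL`. -/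
noncomputable def homogenized {d m : ℕ} (p : ℝ≥0∞)
    (L : EuclideanSpace ℝ (Fin d) → Matrix (Fin m) (Fin d) ℝ → ℝ≥0∞) :
    Matrix (Fin m) (Fin d) ℝ → ℝ≥0∞ := fun ξ =>
  ⨅ k : ℕ, ⨅ _ : 1 ≤ k, ⨅ φ ∈ W1p0 (d := d) (m := m) p (cube d k),
    (∫⁻ x in cube d k, L x (ξ + gradMat φ x)) / ((k : ℝ≥0∞) ^ d)

/-- `Δ^c_h(t)` for an `x`-independent integrand `h` and constant weight `c`. -/
noncomputable def DeltaH {m n : ℕ} (h : Matrix (Fin m) (Fin n) ℝ → ℝ≥0∞)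
    (c : ℝ) (t : ℝ) : EReal :=
  ⨆ ξ ∈ {ξ : Matrix (Fin m) (Fin n) ℝ | h ξ < ⊤},
    ((h (t • ξ) : EReal) - (h ξ : EReal)) / ((c : EReal) + (h ξ : EReal))

/-! ### Auxiliary results -/

section CubeAux
variable {d : ℕ}

/-- The point of `ℝ^d` with integer coordinates `z`. -/
noncomputable def intVec {d : ℕ} (z : Fin d → ℤ) : EuclideanSpace ℝ (Fin d) :=
  (WithLp.equiv 2 (Fin d → ℝ)).symm (fun i => (z i : ℝ))

lemma intVec_apply (z : Fin d → ℤ) (i : Fin d) : intVec z i = (z i : ℝ) := rfl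

lemma cube_eq_preimage (d k : ℕ) :
    cube d k = (MeasurableEquiv.toLp 2 (Fin d → ℝ)).symm ⁻¹'
      (Set.univ.pi fun _ : Fin d => Set.Ioo (0:ℝ) (k:ℝ)) := by
  ext x
  simp only [cube, Set.mem_setOf_eq, Set.mem_preimage, Set.mem_univ_pi]
  rfl

lemma measurableSet_cube (d k : ℕ) : MeasurableSet (cube d k) := by
  rw [cube_eq_preimage]
  exact (MeasurableEquiv.toLp 2 (Fin d → ℝ)).symm.measurable
    (MeasurableSet.univ_pi fun i => measurableSet_Ioo)

lemma volume_cube (d k : ℕ) : volume (cube d k) = (k : ℝ≥0∞) ^ d := by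
  rw [cube_eq_preimage,
    (EuclideanSpace.volume_preserving_symm_measurableEquiv_toLp (Fin d)).measure_preimage
      ((MeasurableSet.univ_pi fun _ => measurableSet_Ioo).nullMeasurableSet),
    volume_pi_pi]
  simp [Real.volume_Ioo, ENNReal.ofReal_natCast]

/-- Translated unit cube. -/
noncomputable def tcube (d k : ℕ) (z : Fin d → Fin k) : Set (EuclideanSpace ℝ (Fin d)) :=
  (fun x => x - intVec (fun i => (z i : ℤ))) ⁻¹' cube d 1

lemma mem_tcube {k : ℕ} (z : Fin d → Fin k) (x : EuclideanSpace ℝ (Fin d)) :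
    x ∈ tcube d k z ↔ ∀ i, x i - (z i : ℝ) ∈ Set.Ioo (0:ℝ) 1 := by
  simp only [tcube, Set.mem_preimage, cube, Set.mem_setOf_eq, Nat.cast_one]
  constructor <;> intro h i <;> have := h i <;>
    simpa [PiLp.sub_apply, intVec_apply] using this

lemma measurableSet_tcube {k : ℕ} (z : Fin d → Fin k) : MeasurableSet (tcube d k z) :=
  (measurable_id.sub_const _) (measurableSet_cube d 1)

lemma tcube_subset {k : ℕ} (z : Fin d → Fin k) : tcube d k z ⊆ cube d k := by
  intro x hx
  rw [mem_tcube] at hx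
  intro i
  obtain ⟨h1, h2⟩ := hx i
  constructor
  · have : (0:ℝ) ≤ (z i : ℝ) := by positivity
    linarith
  · have : (z i : ℝ) + 1 ≤ (k : ℝ) := by
      have := (z i).2
      exact_mod_cast Nat.succ_le_of_lt this
    linarith

lemma tcube_disjoint {k : ℕ} : Pairwise (Function.onFun Disjoint (tcube d k)) := by
  intro z w hzw
  rw [Function.onFun, Set.disjoint_left]
  intro x hxz hxw
  apply hzw
  funext i
  rw [mem_tcube] at hxz hxw
  obtain ⟨h1, h2⟩ := hxz i
  obtain ⟨h3, h4⟩ := hxw i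
  have : (z i : ℝ) = (w i : ℝ) := by
    have hz : ((z i : ℕ) : ℝ) < (w i : ℕ) + 1 := by linarith
    have hw : ((w i : ℕ) : ℝ) < (z i : ℕ) + 1 := by linarith
    have hz' : (z i : ℕ) ≤ (w i : ℕ) := by exact_mod_cast Nat.lt_succ_iff.mp (by exact_mod_cast hz)
    have hw' : (w i : ℕ) ≤ (z i : ℕ) := by exact_mod_cast Nat.lt_succ_iff.mp (by exact_mod_cast hw)
    exact_mod_cast le_antisymm hz' hw'
  exact Fin.ext (by exact_mod_cast this)

lemma lintegral_tcube {k : ℕ} (z : Fin d → Fin k) (f : EuclideanSpace ℝ (Fin d) → ℝ≥0∞)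
    (hf : ∀ x (z' : Fin d → ℤ), f (x + intVec z') = f x) :
    ∫⁻ x in tcube d k z, f x = ∫⁻ x in cube d 1, f x := by
  set v := intVec (fun i => ((z i : ℕ) : ℤ)) with hv
  have hmp : MeasurePreserving (fun y : EuclideanSpace ℝ (Fin d) => y + v) volume volume :=
    measurePreserving_add_right volume v
  have hemb : MeasurableEmbedding (fun y : EuclideanSpace ℝ (Fin d) => y + v) :=
    (MeasurableEquiv.addRight v).measurableEmbedding
  have hpre : (fun y : EuclideanSpace ℝ (Fin d) => y + v) ⁻¹' tcube d k z = cube d 1 := by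
    ext y
    simp [tcube, Set.mem_preimage, add_sub_cancel_right]
    exact Iff.of_eq (congrArg (· ∈ cube d 1) (add_sub_cancel_right y v))
  calc ∫⁻ x in tcube d k z, f x
      = ∫⁻ y in (fun y => y + v) ⁻¹' tcube d k z, f (y + v) :=
        (hmp.setLIntegral_comp_preimage_emb hemb f (tcube d k z)).symm
    _ = ∫⁻ y in cube d 1, f y := by
        rw [hpre]
        exact setLIntegral_congr_fun (measurableSet_cube d 1)
          (fun y _ => hf y _)

lemma lintegral_cube_of_periodic (f : EuclideanSpace ℝ (Fin d) → ℝ≥0∞)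
    (hf : ∀ x (z : Fin d → ℤ), f (x + intVec z) = f x) (k : ℕ) :
    ∫⁻ x in cube d k, f x = (k:ℝ≥0∞)^d * ∫⁻ x in cube d 1, f x := by
  have hμ1 : volume (cube d 1) = 1 := by simp [volume_cube]
  have hμt : ∀ z : Fin d → Fin k, volume (tcube d k z) = 1 := by
    intro z
    have : MeasurePreserving
        (fun x : EuclideanSpace ℝ (Fin d) => x - intVec (fun i => ((z i : ℕ) : ℤ)))
        volume volume := measurePreserving_sub_right volume _
    rw [tcube, this.measure_preimage (measurableSet_cube d 1).nullMeasurableSet, hμ1]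
  set U := ⋃ z : Fin d → Fin k, tcube d k z with hU
  have hUm : MeasurableSet U := MeasurableSet.iUnion fun z => measurableSet_tcube z
  have hUsub : U ⊆ cube d k := Set.iUnion_subset fun z => tcube_subset z
  have hμU : volume U = (k:ℝ≥0∞)^d := by
    rw [hU, measure_iUnion tcube_disjoint fun z => measurableSet_tcube z]
    simp only [hμt, tsum_fintype, Finset.sum_const, Finset.card_univ, nsmul_eq_mul, mul_one]
    rw [Fintype.card_fun]
    simp
  have hae : U =ᵐ[volume] cube d k := by
    refine ae_eq_of_subset_of_measure_ge hUsub ?_ hUm.nullMeasurableSet ?_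
    · rw [hμU, volume_cube]
    · rw [volume_cube]
      exact ENNReal.pow_ne_top (ENNReal.natCast_ne_top k)
  rw [← setLIntegral_congr hae, hU,
    lintegral_iUnion (fun z => measurableSet_tcube z) tcube_disjoint]
  simp only [fun z : Fin d → Fin k => lintegral_tcube z f hf]
  rw [tsum_fintype]
  simp only [Finset.sum_const, Finset.card_univ, nsmul_eq_mul, Fintype.card_fun]
  simp

lemma isCompact_closure_cube (d k : ℕ) : IsCompact (closure (cube d k)) := by
  have hb : Bornology.IsBounded (cube d k) := by
    have hsub : cube d k ⊆ (PiLp.continuousLinearEquiv 2 ℝ (fun _ : Fin d => ℝ)).symm ''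
        (Set.univ.pi fun _ : Fin d => Set.Icc (0:ℝ) (k:ℝ)) := by
      intro x hx
      exact ⟨fun i => x i, fun i _ => ⟨(hx i).1.le, (hx i).2.le⟩, rfl⟩
    refine Bornology.IsBounded.subset ?_ hsub
    apply (IsCompact.image (isCompact_univ_pi fun _ => isCompact_Icc) ?_).isBounded
    exact (PiLp.continuousLinearEquiv 2 ℝ (fun _ : Fin d => ℝ)).symm.continuous
  exact hb.isCompact_closure

end CubeAux

section W1p0Aux
variable {d m : ℕ}

lemma gradMat_smul (t : ℝ) (φ : EuclideanSpace ℝ (Fin d) → EuclideanSpace ℝ (Fin m))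
    (hφ : ContDiff ℝ 1 φ) (x : EuclideanSpace ℝ (Fin d)) :
    gradMat (fun y => t • φ y) x = t • gradMat φ x := by
  have hdiff : DifferentiableAt ℝ φ x := (hφ.differentiable one_ne_zero) x
  have hfd : fderiv ℝ (fun y => t • φ y) x = t • fderiv ℝ φ x := fderiv_fun_const_smul hdiff t
  ext i j
  simp [gradMat, hfd, Matrix.smul_apply]

lemma smul_mem_W1p0 {p : ℝ≥0∞} {A : Set (EuclideanSpace ℝ (Fin d))} (t : ℝ)
    {φ : EuclideanSpace ℝ (Fin d) → EuclideanSpace ℝ (Fin m)}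
    (hφ : φ ∈ W1p0 p A) : (fun y => t • φ y) ∈ W1p0 p A := by
  obtain ⟨h1, h2, h3, h4⟩ := hφ
  refine ⟨h1.const_smul t, ?_, ?_, ?_⟩
  · refine subset_trans (closure_mono ?_) h2
    exact Function.support_const_smul_subset t φ
  · exact h3.const_smul t
  · have heq : (fun x => fderiv ℝ (fun y => t • φ y) x) = fun x => t • fderiv ℝ φ x := by
      funext x
      exact fderiv_fun_const_smul ((h1.differentiable one_ne_zero) x) t
    rw [heq]
    exact h4.const_smul t

lemma continuous_gradMat {φ : EuclideanSpace ℝ (Fin d) → EuclideanSpace ℝ (Fin m)}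
    (hφ : ContDiff ℝ 1 φ) : Continuous (gradMat φ) := by
  have hc : Continuous (fun x => fderiv ℝ φ x) := hφ.continuous_fderiv one_ne_zero
  apply continuous_pi
  intro i
  apply continuous_pi
  intro j
  exact ((EuclideanSpace.proj i).continuous.comp
    ((ContinuousLinearMap.apply ℝ (EuclideanSpace ℝ (Fin m))
      (EuclideanSpace.single j (1:ℝ))).continuous.comp hc))

lemma measurable_L_comp {L : EuclideanSpace ℝ (Fin d) → Matrix (Fin m) (Fin d) ℝ → ℝ≥0∞}
    (hLmeas : Measurable (Function.uncurry L)) (ξ : Matrix (Fin m) (Fin d) ℝ)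
    {φ : EuclideanSpace ℝ (Fin d) → EuclideanSpace ℝ (Fin m)} (hφ : ContDiff ℝ 1 φ) :
    Measurable fun x => L x (ξ + gradMat φ x) := by
  have hcont : Continuous fun x => ξ + gradMat φ x :=
    continuous_const.add (continuous_gradMat hφ)
  exact hLmeas.comp (measurable_id.prodMk hcont.measurable)

end W1p0Aux

section ERealAux

lemma ennreal_coe_ereal_eq {x : ℝ≥0∞} (hx : x ≠ ⊤) : (x : EReal) = ((x.toReal : ℝ) : EReal) := by
  rw [← EReal.toReal_coe_ennreal]
  exact (EReal.coe_toReal (by simpa [EReal.coe_ennreal_eq_top_iff] using hx)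
    (EReal.coe_ennreal_ne_bot x)).symm

variable {A B : ℝ≥0∞} {c : ℝ}

lemma denom_eq (hB : B ≠ ⊤) :
    ((c:EReal) + B) = ((c + B.toReal : ℝ) : EReal) := by
  rw [ennreal_coe_ereal_eq hB, ← EReal.coe_add]

lemma ratio_bound_nonneg {δ : ℝ} (hδ : 0 ≤ δ) (hc : 0 < c) (hB : B ≠ ⊤)
    (h : ((A : EReal) - B) / ((c:EReal) + B) ≤ (δ:EReal)) :
    A ≤ B + ENNReal.ofReal δ * (ENNReal.ofReal c + B) := by
  set b := B.toReal with hb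
  have hb0 : 0 ≤ b := ENNReal.toReal_nonneg
  rw [denom_eq hB] at h
  rw [EReal.div_le_iff_le_mul (by exact_mod_cast by linarith : (0:EReal) < ((c+b:ℝ):EReal))
    (EReal.coe_ne_top _)] at h
  rw [← EReal.coe_mul, ennreal_coe_ereal_eq hB,
    EReal.sub_le_iff_le_add (Or.inl (EReal.coe_ne_bot _)) (Or.inl (EReal.coe_ne_top _)),
    ← EReal.coe_add] at h
  have hA : A ≠ ⊤ := by
    intro hA
    rw [hA, EReal.coe_ennreal_top] at h
    exact (EReal.coe_ne_top _) (top_le_iff.mp h)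
  rw [ennreal_coe_ereal_eq hA, EReal.coe_le_coe_iff] at h
  calc A = ENNReal.ofReal A.toReal := (ENNReal.ofReal_toReal hA).symm
    _ ≤ ENNReal.ofReal (b + δ * (c + b)) := ENNReal.ofReal_le_ofReal (by nlinarith)
    _ = B + ENNReal.ofReal δ * (ENNReal.ofReal c + B) := by
        rw [ENNReal.ofReal_add hb0 (by positivity), ENNReal.ofReal_mul hδ,
          ENNReal.ofReal_add hc.le hb0, ENNReal.ofReal_toReal hB]

lemma ratio_bound_neg {δ : ℝ} (hδ : 0 < δ) (hc : 0 < c) (hB : B ≠ ⊤)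
    (h : ((A : EReal) - B) / ((c:EReal) + B) ≤ ((-δ : ℝ):EReal)) :
    A + ENNReal.ofReal δ * (ENNReal.ofReal c + B) ≤ B := by
  set b := B.toReal with hb
  have hb0 : 0 ≤ b := ENNReal.toReal_nonneg
  rw [denom_eq hB] at h
  rw [EReal.div_le_iff_le_mul (by exact_mod_cast by linarith : (0:EReal) < ((c+b:ℝ):EReal))
    (EReal.coe_ne_top _)] at h
  rw [← EReal.coe_mul, ennreal_coe_ereal_eq hB,
    EReal.sub_le_iff_le_add (Or.inl (EReal.coe_ne_bot _)) (Or.inl (EReal.coe_ne_top _)),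
    ← EReal.coe_add] at h
  have hA : A ≠ ⊤ := by
    intro hA
    rw [hA, EReal.coe_ennreal_top] at h
    exact (EReal.coe_ne_top _) (top_le_iff.mp h)
  rw [ennreal_coe_ereal_eq hA, EReal.coe_le_coe_iff] at h
  calc A + ENNReal.ofReal δ * (ENNReal.ofReal c + B)
      = ENNReal.ofReal (A.toReal + δ * (c + b)) := by
        rw [ENNReal.ofReal_add ENNReal.toReal_nonneg (by positivity), ENNReal.ofReal_mul hδ.le,
          ENNReal.ofReal_add hc.le hb0, ENNReal.ofReal_toReal hB, ENNReal.ofReal_toReal hA]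
    _ ≤ ENNReal.ofReal b := ENNReal.ofReal_le_ofReal (by nlinarith)
    _ = B := ENNReal.ofReal_toReal hB

lemma ratio_le_of_nonneg {δ : ℝ} (hδ : 0 ≤ δ) (hc : 0 < c) (hB : B ≠ ⊤)
    (h : A ≤ B + ENNReal.ofReal δ * (ENNReal.ofReal c + B)) :
    ((A : EReal) - B) / ((c:EReal) + B) ≤ (δ:EReal) := by
  set b := B.toReal with hb
  have hb0 : 0 ≤ b := ENNReal.toReal_nonneg
  have hRfin : B + ENNReal.ofReal δ * (ENNReal.ofReal c + B) ≠ ⊤ := by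
    refine ENNReal.add_ne_top.2 ⟨hB, ENNReal.mul_ne_top ENNReal.ofReal_ne_top ?_⟩
    exact ENNReal.add_ne_top.2 ⟨ENNReal.ofReal_ne_top, hB⟩
  have hA : A ≠ ⊤ := fun hA => hRfin (top_le_iff.mp (hA ▸ h))
  have h' : A.toReal ≤ b + δ * (c + b) := by
    have h2 := ENNReal.toReal_mono hRfin h
    rwa [ENNReal.toReal_add hB (ENNReal.mul_ne_top ENNReal.ofReal_ne_top
        (ENNReal.add_ne_top.2 ⟨ENNReal.ofReal_ne_top, hB⟩)),
      ENNReal.toReal_mul, ENNReal.toReal_add ENNReal.ofReal_ne_top hB,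
      ENNReal.toReal_ofReal hδ, ENNReal.toReal_ofReal hc.le] at h2
  rw [denom_eq hB,
    EReal.div_le_iff_le_mul (by exact_mod_cast by linarith : (0:EReal) < ((c+b:ℝ):EReal))
      (EReal.coe_ne_top _),
    ennreal_coe_ereal_eq hA, ennreal_coe_ereal_eq hB, ← EReal.coe_sub, ← EReal.coe_mul,
    EReal.coe_le_coe_iff]
  nlinarith

lemma ratio_le_of_neg {δ : ℝ} (hδ : 0 < δ) (hc : 0 < c) (hB : B ≠ ⊤)
    (h : A + ENNReal.ofReal δ * (ENNReal.ofReal c + B) ≤ B) :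
    ((A : EReal) - B) / ((c:EReal) + B) ≤ ((-δ : ℝ):EReal) := by
  set b := B.toReal with hb
  have hb0 : 0 ≤ b := ENNReal.toReal_nonneg
  have hA : A ≠ ⊤ := by
    intro hA
    rw [hA] at h
    exact hB (top_le_iff.mp (le_trans (le_add_right le_rfl) h : (⊤:ℝ≥0∞) ≤ B))
  have hX : ENNReal.ofReal δ * (ENNReal.ofReal c + B) ≠ ⊤ :=
    ENNReal.mul_ne_top ENNReal.ofReal_ne_top (ENNReal.add_ne_top.2 ⟨ENNReal.ofReal_ne_top, hB⟩)
  have h' : A.toReal + δ * (c + b) ≤ b := by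
    have h2 := ENNReal.toReal_mono hB h
    rwa [ENNReal.toReal_add hA hX, ENNReal.toReal_mul,
      ENNReal.toReal_add ENNReal.ofReal_ne_top hB,
      ENNReal.toReal_ofReal hδ.le, ENNReal.toReal_ofReal hc.le] at h2
  rw [denom_eq hB,
    EReal.div_le_iff_le_mul (by exact_mod_cast by linarith : (0:EReal) < ((c+b:ℝ):EReal))
      (EReal.coe_ne_top _),
    ennreal_coe_ereal_eq hA, ennreal_coe_ereal_eq hB, ← EReal.coe_sub, ← EReal.coe_mul,
    EReal.coe_le_coe_iff]
  nlinarith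

lemma ratio_ne_bot (hc : 0 < c) (hB : B ≠ ⊤) :
    ((A : EReal) - B) / ((c:EReal) + B) ≠ ⊥ := by
  set b := B.toReal with hb
  intro hcontra
  have h : ((A : EReal) - B) / ((c:EReal) + B) ≤ (⊥ : EReal) := le_of_eq hcontra
  rw [denom_eq hB,
    EReal.div_le_iff_le_mul (by exact_mod_cast by linarith [ENNReal.toReal_nonneg (a := B)] :
      (0:EReal) < ((c+b:ℝ):EReal)) (EReal.coe_ne_top _)] at h
  rw [EReal.coe_mul_bot_of_pos (by linarith [ENNReal.toReal_nonneg (a := B)]), le_bot_iff] at h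
  by_cases hA : A = ⊤
  · rw [hA, EReal.coe_ennreal_top, ennreal_coe_ereal_eq hB, EReal.top_sub_coe] at h
    exact (by simp : (⊤:EReal) ≠ ⊥) h
  · rw [ennreal_coe_ereal_eq hA, ennreal_coe_ereal_eq hB, ← EReal.coe_sub] at h
    exact EReal.coe_ne_bot _ h

end ERealAux

/-- if `L` is `1`-periodic in `x` and periodically ru-usc w.r.t. a
`1`-periodic weight `a`, then the homogenized integrand `ℋL` satisfies
`Δ_{ℋL}^{⟨a⟩}(t) ≤ Δ_L^a(t)` for all `t ∈ [0,1]`, where `⟨a⟩ = ∫_Y a`; in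
particular `ℋL` is ru-usc w.r.t. the constant `⟨a⟩`. -/
theorem homogenized_ru_usc {d m : ℕ} (p : ℝ≥0∞) (hp : 1 ≤ p)
    (L : EuclideanSpace ℝ (Fin d) → Matrix (Fin m) (Fin d) ℝ → ℝ≥0∞)
    (hLmeas : Measurable (Function.uncurry L))
    (hLper : ∀ (x : EuclideanSpace ℝ (Fin d)) (z : Fin d → ℤ) (ξ : Matrix (Fin m) (Fin d) ℝ),
      L (x + (WithLp.equiv 2 (Fin d → ℝ)).symm (fun i => (z i : ℝ))) ξ = L x ξ)
    (a : EuclideanSpace ℝ (Fin d) → ℝ) (ha : ∀ x, 0 < a x)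
    (haint : LocallyIntegrable a)
    (haper : ∀ (x : EuclideanSpace ℝ (Fin d)) (z : Fin d → ℤ), a (x + (WithLp.equiv 2 (Fin d → ℝ)).symm (fun i => (z i : ℝ))) = a x)
    (hru : limsup (Delta Set.univ L a) (nhdsWithin 1 (Set.Iio 1)) ≤ (0 : EReal)) :
    ∀ t ∈ Set.Icc (0:ℝ) 1,
      DeltaH (homogenized p L) (∫ y in cube d 1, a y) t ≤ Delta Set.univ L a t := by
  intro t ht
  set Δ : EReal := Delta Set.univ L a t with hΔdef
  -- pointwise ratio bound from the definition of `Delta`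
  have hpt : ∀ (x : EuclideanSpace ℝ (Fin d)) (ξ' : Matrix (Fin m) (Fin d) ℝ), L x ξ' < ⊤ →
      ((L x (t • ξ') : EReal) - (L x ξ' : EReal)) / ((a x : EReal) + (L x ξ' : EReal)) ≤ Δ := by
    intro x ξ' hξ'
    have h1 : ((L x (t • ξ') : EReal) - (L x ξ' : EReal)) / ((a x : EReal) + (L x ξ' : EReal))
        ≤ ⨆ ξ ∈ {ξ : Matrix (Fin m) (Fin d) ℝ | L x ξ < ⊤},
          ((L x (t • ξ) : EReal) - (L x ξ : EReal)) / ((a x : EReal) + (L x ξ : EReal)) :=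
      le_biSup (fun ξ : Matrix (Fin m) (Fin d) ℝ =>
        ((L x (t • ξ) : EReal) - (L x ξ : EReal)) / ((a x : EReal) + (L x ξ : EReal)))
        (show ξ' ∈ {ξ : Matrix (Fin m) (Fin d) ℝ | L x ξ < ⊤} from hξ')
    exact h1.trans (le_biSup (fun x : EuclideanSpace ℝ (Fin d) =>
      ⨆ ξ ∈ {ξ : Matrix (Fin m) (Fin d) ℝ | L x ξ < ⊤},
        ((L x (t • ξ) : EReal) - (L x ξ : EReal)) / ((a x : EReal) + (L x ξ : EReal)))
      (Set.mem_univ x))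
  -- integrability and positivity of `a`
  have haInt : ∀ k : ℕ, IntegrableOn a (cube d k) := fun k =>
    (haint.integrableOn_isCompact (isCompact_closure_cube d k)).mono_set subset_closure
  have hApos : 0 < ∫ y in cube d 1, a y := by
    rw [setIntegral_pos_iff_support_of_nonneg_ae
      (ae_of_all _ fun x => (ha x).le) (haInt 1)]
    have : Function.support a = Set.univ :=
      Set.eq_univ_of_forall fun x => Function.mem_support.2 (ha x).ne'
    rw [this, Set.univ_inter, volume_cube]
    simp
  set Aavg : ℝ := ∫ y in cube d 1, a y with hAavgdef
  have hAlin : ∀ k : ℕ, ∫⁻ x in cube d k, ENNReal.ofReal (a x)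
      = (k:ℝ≥0∞)^d * ENNReal.ofReal Aavg := by
    intro k
    rw [lintegral_cube_of_periodic (fun x => ENNReal.ofReal (a x))
      (fun x z => congrArg ENNReal.ofReal (haper x z)) k]
    congr 1
    exact (ofReal_integral_eq_lintegral_ofReal (haInt 1)
      (ae_of_all _ fun x => (ha x).le)).symm
  -- trivial case: `Δ = ⊥`
  by_cases hbot : Δ = ⊥
  · have hLtop : ∀ x ξ', L x ξ' = (⊤ : ℝ≥0∞) := by
      intro x ξ'
      by_contra hne
      have h := hpt x ξ' (lt_top_iff_ne_top.2 hne)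
      rw [hbot, le_bot_iff] at h
      exact ratio_ne_bot (ha x) hne h
    have hH : ∀ ξ : Matrix (Fin m) (Fin d) ℝ, homogenized p L ξ = ⊤ := by
      intro ξ
      refine top_le_iff.mp (le_iInf fun k => le_iInf fun hk => le_iInf fun φ =>
        le_iInf fun hφ => ?_)
      have h1 : ∫⁻ x in cube d k, L x (ξ + gradMat φ x) = ⊤ := by
        simp only [hLtop]
        rw [setLIntegral_const, volume_cube]
        rw [ENNReal.top_mul]
        exact pow_ne_zero d (by exact_mod_cast (by omega : k ≠ 0))
      rw [h1, ENNReal.top_div_of_ne_top (ENNReal.pow_ne_top (ENNReal.natCast_ne_top k))]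
    rw [hbot]
    refine iSup₂_le fun ξ hξ => ?_
    have hcon : homogenized p L ξ < ⊤ := hξ
    rw [hH ξ] at hcon
    exact absurd hcon (lt_irrefl _)
  -- trivial case: `Δ = ⊤`
  by_cases htop : Δ = ⊤
  · rw [htop]; exact le_top
  have hΔreal : Δ = ((Δ.toReal : ℝ) : EReal) := (EReal.coe_toReal htop hbot).symm
  rcases le_or_gt 0 Δ with hΔ0 | hΔneg
  · -- case `0 ≤ Δ`
    set δ₀ : ℝ := Δ.toReal with hδ₀def
    have hδ0 : 0 ≤ δ₀ := by
      rw [hΔreal] at hΔ0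
      exact_mod_cast hΔ0
    set δ' : ℝ≥0∞ := ENNReal.ofReal δ₀ with hδ'def
    have hδ'T : δ' ≠ ⊤ := ENNReal.ofReal_ne_top
    have hptP : ∀ x ξ', L x (t • ξ') ≤ L x ξ' + δ' * (ENNReal.ofReal (a x) + L x ξ') := by
      intro x ξ'
      by_cases hfin : L x ξ' = ⊤
      · simp [hfin]
      · exact ratio_bound_nonneg hδ0 (ha x) hfin
          (le_of_le_of_eq (hpt x ξ' (lt_top_iff_ne_top.2 hfin)) hΔreal)
    refine iSup₂_le fun ξ hξ => ?_
    have hHfin : homogenized p L ξ ≠ ⊤ := lt_top_iff_ne_top.1 hξ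
    have key : homogenized p L (t • ξ)
        ≤ homogenized p L ξ + δ' * (ENNReal.ofReal Aavg + homogenized p L ξ) := by
      set B := homogenized p L ξ with hBdef
      refine ENNReal.le_of_forall_pos_le_add fun ε hε hlt => ?_
      set c : ℝ≥0∞ := 1 + δ' with hcdef
      have hcT : c ≠ ⊤ := ENNReal.add_ne_top.2 ⟨ENNReal.one_ne_top, hδ'T⟩
      set ε₂ : ℝ≥0∞ := (ε : ℝ≥0∞) / c with hε₂def
      have hε₂pos : 0 < ε₂ := ENNReal.div_pos_iff.2 ⟨by exact_mod_cast hε.ne', hcT⟩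
      have hBlt : (⨅ k : ℕ, ⨅ _ : 1 ≤ k, ⨅ φ ∈ W1p0 (d := d) (m := m) p (cube d k),
          (∫⁻ x in cube d k, L x (ξ + gradMat φ x)) / ((k : ℝ≥0∞) ^ d)) < B + ε₂ :=
        ENNReal.lt_add_right hHfin hε₂pos.ne'
      obtain ⟨k, hk⟩ := iInf_lt_iff.mp hBlt
      obtain ⟨hk1, hk2⟩ := iInf_lt_iff.mp hk
      obtain ⟨φ, hφk⟩ := iInf_lt_iff.mp hk2
      obtain ⟨hφ, hJ⟩ := iInf_lt_iff.mp hφk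
      have hknz : ((k:ℝ≥0∞))^d ≠ 0 := pow_ne_zero d (by exact_mod_cast (by omega : k ≠ 0))
      have hkT : ((k:ℝ≥0∞))^d ≠ ⊤ := ENNReal.pow_ne_top (ENNReal.natCast_ne_top k)
      set I : ℝ≥0∞ := ∫⁻ x in cube d k, L x (ξ + gradMat φ x) with hIdef
      have hmemt : (fun y => t • φ y) ∈ W1p0 (d := d) (m := m) p (cube d k) :=
        smul_mem_W1p0 t hφ
      have hHt : homogenized p L (t • ξ) ≤
          (∫⁻ x in cube d k, L x (t • ξ + gradMat (fun y => t • φ y) x)) / ((k:ℝ≥0∞)^d) :=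
        iInf_le_of_le k (iInf_le_of_le hk1 (iInf₂_le (fun y => t • φ y) hmemt))
      have hgrad : ∀ x, t • ξ + gradMat (fun y => t • φ y) x = t • (ξ + gradMat φ x) := by
        intro x
        rw [gradMat_smul t φ hφ.1 x, smul_add]
      have hint : (∫⁻ x in cube d k, L x (t • ξ + gradMat (fun y => t • φ y) x))
          ≤ I + δ' * ((k:ℝ≥0∞)^d * ENNReal.ofReal Aavg + I) := by
        have hmono : ∫⁻ x in cube d k, L x (t • ξ + gradMat (fun y => t • φ y) x)
            ≤ ∫⁻ x in cube d k, (L x (ξ + gradMat φ x)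
              + δ' * (ENNReal.ofReal (a x) + L x (ξ + gradMat φ x))) := by
          refine lintegral_mono fun x => ?_
          rw [hgrad x]
          exact hptP x _
        refine hmono.trans ?_
        have hfmeas : Measurable fun x => L x (ξ + gradMat φ x) :=
          measurable_L_comp hLmeas ξ hφ.1
        rw [lintegral_add_left' hfmeas.aemeasurable,
          lintegral_const_mul' _ _ hδ'T,
          lintegral_add_right' _ hfmeas.aemeasurable, hAlin k]
      have hdiv : (I + δ' * ((k:ℝ≥0∞)^d * ENNReal.ofReal Aavg + I)) / ((k:ℝ≥0∞)^d)
          = I / ((k:ℝ≥0∞)^d) + δ' * (ENNReal.ofReal Aavg + I / ((k:ℝ≥0∞)^d)) := by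
        rw [ENNReal.add_div, mul_div_assoc, ENNReal.add_div,
          mul_comm ((k:ℝ≥0∞)^d) (ENNReal.ofReal Aavg), mul_div_assoc,
          ENNReal.div_self hknz hkT, mul_one]
      set J : ℝ≥0∞ := I / ((k:ℝ≥0∞)^d) with hJdef
      have hJlt : J ≤ B + ε₂ := hJ.le
      calc homogenized p L (t • ξ)
          ≤ (∫⁻ x in cube d k, L x (t • ξ + gradMat (fun y => t • φ y) x)) / ((k:ℝ≥0∞)^d) := hHt
        _ ≤ (I + δ' * ((k:ℝ≥0∞)^d * ENNReal.ofReal Aavg + I)) / ((k:ℝ≥0∞)^d) :=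
            ENNReal.div_le_div_right hint _
        _ = J + δ' * (ENNReal.ofReal Aavg + J) := hdiv
        _ ≤ (B + ε₂) + δ' * (ENNReal.ofReal Aavg + (B + ε₂)) := by gcongr
        _ = (B + δ' * (ENNReal.ofReal Aavg + B)) + (1 + δ') * ε₂ := by ring
        _ ≤ (B + δ' * (ENNReal.ofReal Aavg + B)) + ε := by
            refine add_le_add_right ?_ _
            rw [hε₂def, ← hcdef]
            exact ENNReal.mul_div_le
    rw [hΔreal]
    exact ratio_le_of_nonneg hδ0 hApos hHfin key
  · -- case `Δ < 0`
    set δ₀ : ℝ := -Δ.toReal with hδ₀def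
    have hδpos : 0 < δ₀ := by
      rw [hδ₀def, neg_pos]
      have : ((Δ.toReal : ℝ) : EReal) < ((0:ℝ) : EReal) := by
        rw [← hΔreal]
        exact_mod_cast hΔneg
      exact_mod_cast this
    have hΔeq : Δ = ((-δ₀ : ℝ) : EReal) := by
      rw [hδ₀def, neg_neg]
      exact hΔreal
    set δ' : ℝ≥0∞ := ENNReal.ofReal δ₀ with hδ'def
    have hδ'T : δ' ≠ ⊤ := ENNReal.ofReal_ne_top
    have hptN : ∀ x ξ', L x (t • ξ') + δ' * (ENNReal.ofReal (a x) + L x ξ') ≤ L x ξ' := by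
      intro x ξ'
      by_cases hfin : L x ξ' = ⊤
      · rw [hfin]; exact le_top
      · exact ratio_bound_neg hδpos (ha x) hfin
          (le_of_le_of_eq (hpt x ξ' (lt_top_iff_ne_top.2 hfin)) hΔeq)
    refine iSup₂_le fun ξ hξ => ?_
    have hHfin : homogenized p L ξ ≠ ⊤ := lt_top_iff_ne_top.1 hξ
    have key : homogenized p L (t • ξ) + δ' * (ENNReal.ofReal Aavg + homogenized p L ξ)
        ≤ homogenized p L ξ := by
      have key2 : ∀ (k : ℕ), 1 ≤ k → ∀ φ ∈ W1p0 (d := d) (m := m) p (cube d k),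
          homogenized p L (t • ξ) + δ' * (ENNReal.ofReal Aavg + homogenized p L ξ)
            ≤ (∫⁻ x in cube d k, L x (ξ + gradMat φ x)) / ((k:ℝ≥0∞)^d) := by
        intro k hk1 φ hφ
        have hknz : ((k:ℝ≥0∞))^d ≠ 0 := pow_ne_zero d (by exact_mod_cast (by omega : k ≠ 0))
        have hkT : ((k:ℝ≥0∞))^d ≠ ⊤ := ENNReal.pow_ne_top (ENNReal.natCast_ne_top k)
        set I : ℝ≥0∞ := ∫⁻ x in cube d k, L x (ξ + gradMat φ x) with hIdef
        set J : ℝ≥0∞ := I / ((k:ℝ≥0∞)^d) with hJdef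
        have hBleJ : homogenized p L ξ ≤ J :=
          iInf_le_of_le k (iInf_le_of_le hk1 (iInf₂_le φ hφ))
        have hmemt : (fun y => t • φ y) ∈ W1p0 (d := d) (m := m) p (cube d k) :=
          smul_mem_W1p0 t hφ
        set It : ℝ≥0∞ := ∫⁻ x in cube d k, L x (t • ξ + gradMat (fun y => t • φ y) x)
          with hItdef
        have hHt : homogenized p L (t • ξ) ≤ It / ((k:ℝ≥0∞)^d) :=
          iInf_le_of_le k (iInf_le_of_le hk1 (iInf₂_le (fun y => t • φ y) hmemt))
        have hgrad : ∀ x, t • ξ + gradMat (fun y => t • φ y) x = t • (ξ + gradMat φ x) := by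
          intro x
          rw [gradMat_smul t φ hφ.1 x, smul_add]
        have hfmeas : Measurable fun x => L x (ξ + gradMat φ x) :=
          measurable_L_comp hLmeas ξ hφ.1
        have hgmeas : Measurable fun x => L x (t • ξ + gradMat (fun y => t • φ y) x) :=
          measurable_L_comp hLmeas (t • ξ) (hφ.1.const_smul t)
        have hsum : It + δ' * ((k:ℝ≥0∞)^d * ENNReal.ofReal Aavg + I) ≤ I := by
          have hmono : ∫⁻ x in cube d k, (L x (t • ξ + gradMat (fun y => t • φ y) x)
              + δ' * (ENNReal.ofReal (a x) + L x (ξ + gradMat φ x))) ≤ I := by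
            refine lintegral_mono fun x => ?_
            have := hptN x (ξ + gradMat φ x)
            rw [← hgrad x] at this
            exact this
          rw [lintegral_add_left' hgmeas.aemeasurable,
            lintegral_const_mul' _ _ hδ'T,
            lintegral_add_right' _ hfmeas.aemeasurable, hAlin k] at hmono
          exact hmono
        have hdivle : (It + δ' * ((k:ℝ≥0∞)^d * ENNReal.ofReal Aavg + I)) / ((k:ℝ≥0∞)^d)
            ≤ J := ENNReal.div_le_div_right hsum _
        have hdiv : (It + δ' * ((k:ℝ≥0∞)^d * ENNReal.ofReal Aavg + I)) / ((k:ℝ≥0∞)^d)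
            = It / ((k:ℝ≥0∞)^d) + δ' * (ENNReal.ofReal Aavg + J) := by
          rw [ENNReal.add_div, mul_div_assoc, ENNReal.add_div,
            mul_comm ((k:ℝ≥0∞)^d) (ENNReal.ofReal Aavg), mul_div_assoc,
            ENNReal.div_self hknz hkT, mul_one]
        calc homogenized p L (t • ξ) + δ' * (ENNReal.ofReal Aavg + homogenized p L ξ)
            ≤ It / ((k:ℝ≥0∞)^d) + δ' * (ENNReal.ofReal Aavg + J) := by gcongr
          _ = (It + δ' * ((k:ℝ≥0∞)^d * ENNReal.ofReal Aavg + I)) / ((k:ℝ≥0∞)^d) := hdiv.symm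
          _ ≤ J := hdivle
      exact le_iInf fun k => le_iInf fun hk1 => le_iInf fun φ => le_iInf fun hφ =>
        key2 k hk1 φ hφ
    rw [hΔeq]
    exact ratio_le_of_neg hδpos hApos hHfin key
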